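/- Let Π be a normal logic program and D_Π its defeasible theory translation. A set M ⊆ At(Π) is a stable model of Π iff M^¬ is an α-stable set of D_Π, where M^¬ = M ∪ {¬p : p ∈ At(Π), p ∉ M}. -/

import Mathlib

namespace DLWFS

universe u

/-- Ground literals over a type `A` of atoms: atoms and their classical complements. -/
inductive Lit (A : Type u) : Type u where
  | pos : A → Lit A
  | neg : A → Lit A

/-- The classical complement `p̄` of a literal `p`. -/
def Lit.compl {A : Type u} : Lit A → Lit A
  | .pos a => .neg a
  | .neg a => .pos a

/-- The three kinds of rules of a defeasible theory. -/
inductive RuleKind : Type where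
  | strict
  | defeasible
  | defeater
deriving DecidableEq

/-- A rule of a defeasible theory: a kind, a body (a set of literals) and a head literal. -/
structure DRule (A : Type u) where
  kind : RuleKind
  body : Set (Lit A)
  head : Lit A

/-- A defeasible theory `D = ⟨R, C, ≺⟩`. -/
structure DTheory (A : Type u) where
  rules : Set (DRule A)
  conflicts : Set (Set (Lit A))
  prec : DRule A → DRule A → Prop

namespace DTheory

variable {A : Type u}

/-- The strict rules `R_s`. -/
def Rs (D : DTheory A) : Set (DRule A) := {r ∈ D.rules | r.kind = RuleKind.strict}

/-- The defeasible rules `R_d`. -/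
def Rd (D : DTheory A) : Set (DRule A) := {r ∈ D.rules | r.kind = RuleKind.defeasible}

/-- The defeater rules `R_u`. -/
def Ru (D : DTheory A) : Set (DRule A) := {r ∈ D.rules | r.kind = RuleKind.defeater}

/-- `C[p]`: the conflict sets containing literal `p`. -/
def Cset (D : DTheory A) (p : Lit A) : Set (Set (Lit A)) := {c ∈ D.conflicts | p ∈ c}

/-- Structural conditions in the definition of a defeasible theory: a countable set of
rules with finite bodies, a countable set of finite conflict sets containing every
minimal conflict set `{p, ¬p}`, and an acyclic priority relation over non-strict rules. -/
def WellFormed (D : DTheory A) : Prop :=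
  D.rules.Countable ∧ D.conflicts.Countable ∧
  (∀ r ∈ D.rules, r.body.Finite) ∧
  (∀ c ∈ D.conflicts, c.Finite) ∧
  (∀ p : A, ({Lit.pos p, Lit.neg p} : Set (Lit A)) ∈ D.conflicts) ∧
  (∀ r s, D.prec r s → r.kind ≠ RuleKind.strict ∧ s.kind ≠ RuleKind.strict) ∧
  (∀ r, ¬ Relation.TransGen D.prec r r)

/-- `C = C_MIN`: the conflict sets are exactly the minimal ones `{p, ¬p}`. -/
def MinimalConflicts (D : DTheory A) : Prop :=
  D.conflicts = {c | ∃ p : A, c = ({Lit.pos p, Lit.neg p} : Set (Lit A))}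

end DTheory

/-- A 3-valued interpretation: a pair `⟨T, F⟩` of sets. -/
abbrev Interp (L : Type u) : Type u := Set L × Set L

variable {A : Type u}

/-- `S` is ADL-unfounded with respect to theory `D` and interpretation `I = ⟨T, F⟩`. -/
def ADLUnfounded (D : DTheory A) (I : Interp (Lit A)) (S : Set (Lit A)) : Prop :=
  ∀ p ∈ S,
    (∀ r ∈ D.Rs, r.head = p → (r.body ∩ (I.2 ∪ S)).Nonempty) ∧
    (∀ r ∈ D.Rd, r.head = p →
      (r.body ∩ (I.2 ∪ S)).Nonempty ∨
      ∃ c ∈ D.conflicts, p ∈ c ∧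
        ∀ q ∈ c \ {p}, ∃ s ∈ D.rules, s.head = q ∧ s.body ⊆ I.1 ∧
          (D.prec r s ∨ s.kind = RuleKind.strict))

/-- `S` is NDL-unfounded with respect to theory `D` and interpretation `I = ⟨T, F⟩`. -/
def NDLUnfounded (D : DTheory A) (I : Interp (Lit A)) (S : Set (Lit A)) : Prop :=
  ∀ p ∈ S,
    (∀ r ∈ D.Rs, r.head = p → (r.body ∩ (I.2 ∪ S)).Nonempty) ∧
    (∀ r ∈ D.Rd, r.head = p →
      (r.body ∩ (I.2 ∪ S)).Nonempty ∨
      ∃ c ∈ D.conflicts, p ∈ c ∧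
        ∀ q ∈ c \ {p}, ∃ s ∈ D.rules, s.head = q ∧ s.body ⊆ I.1 ∧
          ¬ D.prec s r)

/-- `U_D(I)` for ADL: the union of all ADL-unfounded sets. -/
def UA (D : DTheory A) (I : Interp (Lit A)) : Set (Lit A) :=
  ⋃₀ {S | ADLUnfounded D I S}

/-- `U_D(I)` for NDL: the union of all NDL-unfounded sets. -/
def UN (D : DTheory A) (I : Interp (Lit A)) : Set (Lit A) :=
  ⋃₀ {S | NDLUnfounded D I S}

/-- `T_D(I)`: the literals having a witness of provability with respect to `I = ⟨T, F⟩`. -/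
def TD (D : DTheory A) (I : Interp (Lit A)) : Set (Lit A) :=
  {p | ∃ r ∈ D.rules, r.head = p ∧ r.body ⊆ I.1 ∧
    (r.kind = RuleKind.strict ∨
      (r.kind = RuleKind.defeasible ∧
        ∀ c ∈ D.conflicts, p ∈ c →
          ∃ q ∈ c \ {p}, ∀ s ∈ D.rules, s.head = q →
            (D.prec s r ∨ (s.body ∩ I.2).Nonempty)))}

/-- `W_D` for ADL. -/
def WA (D : DTheory A) (I : Interp (Lit A)) : Interp (Lit A) := (TD D I, UA D I)

/-- `W_D` for NDL. -/
def WN (D : DTheory A) (I : Interp (Lit A)) : Interp (Lit A) := (TD D I, UN D I)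

/-- `I` is the well-founded model for the operator `W`: the least fixpoint of `W`
(componentwise order). -/
def IsWFModel {L : Type u} (W : Interp L → Interp L) (I : Interp L) : Prop :=
  W I = I ∧ ∀ J, W J = J → I.1 ⊆ J.1 ∧ I.2 ⊆ J.2

/-- A rule of a normal logic program: `head ← pos, ∼neg`. -/
structure NRule (A : Type u) where
  head : A
  pos : Set A
  neg : Set A

/-- A normal logic program: a set of rules. -/
abbrev NProgram (A : Type u) : Type u := Set (NRule A)

/-- Structural conditions in the definition of a normal logic program: a countable
set of ground rules with finite bodies. -/
def NProgram.WellFormed (P : NProgram A) : Prop :=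
  P.Countable ∧ ∀ r ∈ P, r.pos.Finite ∧ r.neg.Finite

/-- The immediate consequence operator `T_Π` on 3-valued interpretations. -/
def TP (P : NProgram A) (I : Interp A) : Set A :=
  {a | ∃ r ∈ P, r.head = a ∧ r.pos ⊆ I.1 ∧ r.neg ⊆ I.2}

/-- `S` is an unfounded set of program `P` with respect to interpretation `I = ⟨T, F⟩`. -/
def PUnfounded (P : NProgram A) (I : Interp A) (S : Set A) : Prop :=
  ∀ p ∈ S, ∀ r ∈ P, r.head = p →
    (r.pos ∩ (I.2 ∪ S)).Nonempty ∨ (r.neg ∩ I.1).Nonempty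

/-- `U_Π(I)`: the greatest unfounded set (union of all unfounded sets). -/
def UP (P : NProgram A) (I : Interp A) : Set A :=
  ⋃₀ {S | PUnfounded P I S}

/-- `W_Π(I) = ⟨T_Π(I), U_Π(I)⟩`. -/
def WP (P : NProgram A) (I : Interp A) : Interp A := (TP P I, UP P I)

/-- Transfinite iteration of an operator `W` from `⊥`, taking suprema at limit ordinals. -/
noncomputable def iterW {α : Type*} [CompleteLattice α] (W : α → α) : Ordinal.{0} → α :=
  fun o =>
    Ordinal.limitRecOn (motive := fun _ => α) o ⊥ (fun _ ih => W ih)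
      (fun o' _ ih => ⨆ x : Set.Iio o', ih x.1 x.2)

/-- One step of the immediate consequence operator for a set of defeasible-theory rules. -/
def TRstep (R : Set (DRule A)) (S : Set (Lit A)) : Set (Lit A) :=
  {p | ∃ r ∈ R, r.head = p ∧ r.body ⊆ S}

/-- The finite iterates `T_R ↑ n`. -/
def TRiter (R : Set (DRule A)) : ℕ → Set (Lit A)
  | 0 => ∅
  | n + 1 => TRstep R (TRiter R n)

/-- `Cl(R) = T_R ↑ ω`. -/
def ClR (R : Set (DRule A)) : Set (Lit A) := ⋃ n, TRiter R n

/-- The `α`-reduct `D_α^S` of a defeasible theory. -/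
def alphaReduct (D : DTheory A) (S : Set (Lit A)) : Set (DRule A) :=
  D.Rs ∪ {r ∈ D.Rd | ∀ c ∈ D.conflicts, r.head ∈ c → ∃ q ∈ c \ {r.head}, q ∉ S}

/-- The ambiguity-propagating operator `α_D(S) = Cl(D_α^S)`. -/
def alphaOp (D : DTheory A) (S : Set (Lit A)) : Set (Lit A) := ClR (alphaReduct D S)

/-- The `β`-reduct `D_β^S` of a defeasible theory. -/
def betaReduct (D : DTheory A) (S : Set (Lit A)) : Set (DRule A) :=
  D.Rs ∪ {r ∈ D.Rd | ∀ c ∈ D.conflicts, r.head ∈ c →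
    ∃ q ∈ c \ {r.head}, ∀ s ∈ D.rules, s.head = q → (¬ s.body ⊆ S ∨ D.prec s r)}

/-- The ambiguity-blocking operator `β_D(S) = Cl(D_β^S)`. -/
def betaOp (D : DTheory A) (S : Set (Lit A)) : Set (Lit A) := ClR (betaReduct D S)

/-- `S` is an `α`-stable set of `D`. -/
def AlphaStable (D : DTheory A) (S : Set (Lit A)) : Prop := alphaOp D S = S

/-- `S` is a `β`-stable set of `D`. -/
def BetaStable (D : DTheory A) (S : Set (Lit A)) : Prop := betaOp D S = S

/-- The sequence `X_D↑λ`: `X↑0 = ∅`, `X↑(λ+1) = β_D(β_D(X↑λ))`, unions at limits. -/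
noncomputable def Xseq (D : DTheory A) : Ordinal.{0} → Set (Lit A) :=
  iterW (fun S => betaOp D (betaOp D S))

/-- The Gelfond–Lifschitz reduct `Π^S`. -/
def glReduct (P : NProgram A) (S : Set A) : NProgram A :=
  {r' | ∃ r ∈ P, r.neg ∩ S = ∅ ∧ r' = NRule.mk r.head r.pos ∅}

/-- One step of the immediate consequence operator for a NAF-free program. -/
def TPstep (P : NProgram A) (S : Set A) : Set A :=
  {a | ∃ r ∈ P, r.head = a ∧ r.pos ⊆ S}

/-- The finite iterates `T_Π ↑ n` of a NAF-free program. -/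
def TPiter (P : NProgram A) : ℕ → Set A
  | 0 => ∅
  | n + 1 => TPstep P (TPiter P n)

/-- `Cl(Π) = T_Π ↑ ω`. -/
def ClP (P : NProgram A) : Set A := ⋃ n, TPiter P n

/-- The Gelfond–Lifschitz operator `γ_Π(S) = Cl(Π^S)`. -/
def gamma (P : NProgram A) (S : Set A) : Set A := ClP (glReduct P S)

/-- `S` is a stable model of `P`. -/
def StableModel (P : NProgram A) (S : Set A) : Prop := gamma P S = S

/-- `Prod(C[p])`: all sets obtained by choosing one literal other than `p` from each
conflict set containing `p`. -/
def ProdC (D : DTheory A) (p : Lit A) : Set (Set (Lit A)) :=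
  {Q | ∃ f : Set (Lit A) → Lit A,
    (∀ c ∈ D.conflicts, p ∈ c → f c ∈ c \ {p}) ∧
    Q = f '' {c ∈ D.conflicts | p ∈ c}}

/-- The logic program translation `Π_D` of a defeasible theory `D` (negative literals
are treated as fresh atoms, so the atoms of the program are the literals of `D`). -/
def lpTrans (D : DTheory A) : NProgram (Lit A) :=
  {r' | ∃ r ∈ D.Rs, r' = NRule.mk r.head r.body ∅} ∪
  {r' | ∃ r ∈ D.Rd, ∃ Q ∈ ProdC D r.head, r' = NRule.mk r.head r.body Q}

/-- The explicit version `Φ` of a normal program `Π`: atoms of `Φ` are the literals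
over the atoms of `Π` (`¬p` being a fresh atom). -/
def explicitVer (P : NProgram A) : NProgram (Lit A) :=
  {r' | ∃ r ∈ P, r' = NRule.mk (Lit.pos r.head) (Lit.pos '' r.pos ∪ Lit.neg '' r.neg) ∅} ∪
  {r' | ∃ p : A, r' = NRule.mk (Lit.neg p) ∅ {Lit.pos p}}

/-- The minimal conflict sets over atom type `A`. -/
def CMin (A : Type u) : Set (Set (Lit A)) :=
  {c | ∃ p : A, c = ({Lit.pos p, Lit.neg p} : Set (Lit A))}

/-- The defeasible theory translation `D_Π` of a normal program `Π`: each program rule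
becomes a strict rule (default literals `∼b` becoming negative literals `¬b`), and each
atom `p` yields a presumption `∅ ⇒ ¬p`; conflict sets are minimal and `≺` is empty. -/
def dtTrans (P : NProgram A) : DTheory A :=
  { rules :=
      {e | ∃ r ∈ P, e = DRule.mk RuleKind.strict
            (Lit.pos '' r.pos ∪ Lit.neg '' r.neg) (Lit.pos r.head)} ∪
      {e | ∃ p : A, e = DRule.mk RuleKind.defeasible ∅ (Lit.neg p)}
    conflicts := CMin A
    prec := fun _ _ => False }

/-- `M^¬ = M ∪ {¬p : p ∉ M}`, atoms being identified with positive literals. -/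
def negCompl (M : Set A) : Set (Lit A) :=
  Lit.pos '' M ∪ Lit.neg '' {p | p ∉ M}

end DLWFS

namespace DLWFS

section Aux

variable {A : Type*}

lemma pos_mem_negCompl {M : Set A} {a : A} : Lit.pos a ∈ negCompl M ↔ a ∈ M := by
  simp [negCompl]

lemma neg_mem_negCompl {M : Set A} {a : A} : Lit.neg a ∈ negCompl M ↔ a ∉ M := by
  simp [negCompl]

/-- The good rules: strict translations plus presumptions for `p ∉ M`. -/
def Rgood (P : NProgram A) (M : Set A) : Set (DRule A) :=
  {e | ∃ r ∈ P, e = DRule.mk RuleKind.strict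
        (Lit.pos '' r.pos ∪ Lit.neg '' r.neg) (Lit.pos r.head)} ∪
  {e | ∃ p : A, p ∉ M ∧ e = DRule.mk RuleKind.defeasible ∅ (Lit.neg p)}

lemma Rs_dtTrans (P : NProgram A) :
    (dtTrans P).Rs = {e | ∃ r ∈ P, e = DRule.mk RuleKind.strict
        (Lit.pos '' r.pos ∪ Lit.neg '' r.neg) (Lit.pos r.head)} := by
  ext e
  constructor
  · rintro ⟨he, hk⟩
    rcases he with h | ⟨p, rfl⟩
    · exact h
    · simp at hk
  · rintro ⟨r, hr, rfl⟩
    exact ⟨Or.inl ⟨r, hr, rfl⟩, rfl⟩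

lemma Rd_dtTrans (P : NProgram A) :
    (dtTrans P).Rd = {e | ∃ p : A, e = DRule.mk RuleKind.defeasible ∅ (Lit.neg p)} := by
  ext e
  constructor
  · rintro ⟨he, hk⟩
    rcases he with ⟨r, _, rfl⟩ | h
    · simp at hk
    · exact h
  · rintro ⟨p, rfl⟩
    exact ⟨Or.inr ⟨p, rfl⟩, rfl⟩

lemma alphaReduct_dtTrans (P : NProgram A) (M : Set A) :
    alphaReduct (dtTrans P) (negCompl M) = Rgood P M := by
  ext e
  unfold alphaReduct Rgood
  rw [Rs_dtTrans, Rd_dtTrans]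
  constructor
  · rintro (h | ⟨⟨p, rfl⟩, hcond⟩)
    · exact Or.inl h
    · refine Or.inr ⟨p, ?_, rfl⟩
      have hc : ({Lit.pos p, Lit.neg p} : Set (Lit A)) ∈ (dtTrans P).conflicts :=
        ⟨p, rfl⟩
      have hmem : (DRule.mk RuleKind.defeasible ∅ (Lit.neg p)).head ∈
          ({Lit.pos p, Lit.neg p} : Set (Lit A)) := by simp
      obtain ⟨q, hq, hqS⟩ := hcond _ hc hmem
      have : q = Lit.pos p := by
        rcases hq with ⟨hq1, hq2⟩
        simp at hq2
        rcases hq1 with h | h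
        · exact h
        · exact absurd h hq2
      subst this
      intro hpM
      exact hqS (pos_mem_negCompl.mpr hpM)
  · rintro (h | ⟨p, hpM, rfl⟩)
    · exact Or.inl h
    · refine Or.inr ⟨⟨p, rfl⟩, ?_⟩
      rintro c ⟨q, rfl⟩ hh
      simp only [DRule.mk] at hh
      have hq : q = p := by
        rcases hh with h | h
        · exact absurd h (by simp)
        · simpa using h.symm
      subst hq
      refine ⟨Lit.pos q, ⟨by simp, by simp⟩, ?_⟩
      intro hmem
      exact hpM (pos_mem_negCompl.mp hmem)

lemma TRstep_mono (R : Set (DRule A)) {S T : Set (Lit A)} (h : S ⊆ T) :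
    TRstep R S ⊆ TRstep R T := by
  rintro p ⟨r, hr, hh, hb⟩
  exact ⟨r, hr, hh, hb.trans h⟩

lemma TRiter_mono_succ (R : Set (DRule A)) : ∀ n, TRiter R n ⊆ TRiter R (n + 1) := by
  intro n
  induction n with
  | zero => simp [TRiter]
  | succ n ih => exact TRstep_mono R ih

lemma TRiter_mono (R : Set (DRule A)) : Monotone (TRiter R) := by
  apply monotone_nat_of_le_succ
  exact fun n => TRiter_mono_succ R n

lemma TPstep_mono (P : NProgram A) {S T : Set A} (h : S ⊆ T) :
    TPstep P S ⊆ TPstep P T := by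
  rintro a ⟨r, hr, hh, hb⟩
  exact ⟨r, hr, hh, hb.trans h⟩

lemma TPiter_mono (P : NProgram A) : Monotone (TPiter P) := by
  apply monotone_nat_of_le_succ
  intro n
  induction n with
  | zero => simp [TPiter]
  | succ n ih => exact TPstep_mono P ih

lemma finite_subset_iter {α : Type*} {f : ℕ → Set α} (hmono : Monotone f)
    {s : Set α} (hs : s.Finite) (h : s ⊆ ⋃ n, f n) : ∃ n, s ⊆ f n := by
  refine Set.Finite.induction_on (motive := fun s _ => s ⊆ (⋃ n, f n) → ∃ n, s ⊆ f n)
    s hs (fun _ => ⟨0, Set.empty_subset _⟩) ?_ h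
  intro a s _ _ ih h
  obtain ⟨n, hn⟩ := ih (fun x hx => h (Set.mem_insert_of_mem a hx))
  obtain ⟨_, ⟨m, rfl⟩, hm⟩ := h (Set.mem_insert a s)
  exact ⟨max n m, Set.insert_subset (hmono (le_max_right n m) hm)
    (hn.trans (hmono (le_max_left n m)))⟩

lemma ClP_closed (P' : NProgram A) (hfin : ∀ r ∈ P', r.pos.Finite) :
    TPstep P' (ClP P') ⊆ ClP P' := by
  rintro a ⟨r, hr, hh, hb⟩
  obtain ⟨n, hn⟩ := finite_subset_iter (TPiter_mono P') (hfin r hr) hb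
  exact Set.mem_iUnion.mpr ⟨n + 1, r, hr, hh, hn⟩

lemma ClR_eq (P : NProgram A) (hwf : P.WellFormed) (M : Set A) :
    ClR (Rgood P M) = Lit.pos '' gamma P M ∪ Lit.neg '' Mᶜ := by
  have hfin : ∀ r ∈ glReduct P M, r.pos.Finite := by
    rintro r' ⟨r, hr, _, rfl⟩
    exact (hwf.2 r hr).1
  apply Set.Subset.antisymm
  · -- forward
    have fwd : ∀ n, ∀ p ∈ TRiter (Rgood P M) n,
        p ∈ Lit.pos '' gamma P M ∪ Lit.neg '' Mᶜ := by
      intro n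
      induction n with
      | zero => intro p hn; exact absurd hn (by simp [TRiter])
      | succ n ih =>
        intro p hn
        obtain ⟨e, he, hh, hb⟩ := hn
        rcases he with ⟨r, hr, rfl⟩ | ⟨q, hq, rfl⟩
        · -- strict rule
          simp only [DRule.mk] at hh hb
          subst hh
          have hpos : ∀ b ∈ r.pos, b ∈ gamma P M := by
            intro b hb'
            have := ih (Lit.pos b) (hb (Or.inl ⟨b, hb', rfl⟩))
            rcases this with ⟨x, hx, hxe⟩ | ⟨x, _, hxe⟩
            · rwa [show x = b from by injection hxe] at hx
            · exact absurd hxe (by simp)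
          have hneg : r.neg ∩ M = ∅ := by
            ext b
            simp only [Set.mem_inter_iff, Set.mem_empty_iff_false, iff_false, not_and]
            intro hb' hbM
            have := ih (Lit.neg b) (hb (Or.inr ⟨b, hb', rfl⟩))
            rcases this with ⟨x, _, hxe⟩ | ⟨x, hx, hxe⟩
            · exact absurd hxe (by simp)
            · rw [show x = b from by injection hxe] at hx
              exact hx hbM
          refine Or.inl ⟨r.head, ?_, rfl⟩
          exact ClP_closed _ hfin ⟨NRule.mk r.head r.pos ∅, ⟨r, hr, hneg, rfl⟩, rfl, hpos⟩
        · -- presumption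
          simp only [DRule.mk] at hh
          subst hh
          exact Or.inr ⟨q, hq, rfl⟩
    rintro p hp
    obtain ⟨n, hn⟩ := Set.mem_iUnion.mp hp
    exact fwd n p hn
  · -- backward
    rintro p (⟨a, ha, rfl⟩ | ⟨a, ha, rfl⟩)
    · -- positive literals
      obtain ⟨n, hn⟩ := Set.mem_iUnion.mp ha
      clear ha
      have key : ∀ n, ∀ a ∈ TPiter (glReduct P M) n,
          Lit.pos a ∈ TRiter (Rgood P M) (n + 1) := by
        intro n
        induction n with
        | zero => intro a ha; exact absurd ha (by simp [TPiter])
        | succ n ih =>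
          rintro a ⟨r', hr', hh, hb⟩
          obtain ⟨r, hr, hneg, rfl⟩ := hr'
          simp only [NRule.mk] at hh hb
          subst hh
          refine ⟨DRule.mk RuleKind.strict
            (Lit.pos '' r.pos ∪ Lit.neg '' r.neg) (Lit.pos r.head),
            Or.inl ⟨r, hr, rfl⟩, rfl, ?_⟩
          rintro q (⟨b, hb', rfl⟩ | ⟨b, hb', rfl⟩)
          · exact ih b (hb hb')
          · have hbM : b ∉ M := by
              intro hbM
              exact absurd (Set.mem_inter hb' hbM) (by rw [hneg]; simp)
            have h1 : Lit.neg b ∈ TRiter (Rgood P M) 1 :=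
              ⟨DRule.mk RuleKind.defeasible ∅ (Lit.neg b),
                Or.inr ⟨b, hbM, rfl⟩, rfl, by simp⟩
            exact TRiter_mono (Rgood P M) (Nat.one_le_iff_ne_zero.mpr (by simp)) h1
      exact Set.mem_iUnion.mpr ⟨n + 1, key n a hn⟩
    · -- negative literals
      refine Set.mem_iUnion.mpr ⟨1, ?_⟩
      exact ⟨DRule.mk RuleKind.defeasible ∅ (Lit.neg a),
        Or.inr ⟨a, ha, rfl⟩, rfl, by simp⟩

end Aux

/-- Let `Π` be a normal program and `D_Π` its defeasible theory translation. A set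
`M ⊆ At(Π)` is a stable model of `Π` iff `M^¬ = M ∪ {¬p : p ∉ M}` is an `α`-stable set
of `D_Π`. -/
theorem dtTrans_stable_models {A : Type*} (P : NProgram A) (hwf : P.WellFormed) :
    ∀ M : Set A, StableModel P M ↔ AlphaStable (dtTrans P) (negCompl M) := by
  intro M
  have halpha : alphaOp (dtTrans P) (negCompl M)
      = Lit.pos '' gamma P M ∪ Lit.neg '' Mᶜ := by
    rw [alphaOp, alphaReduct_dtTrans, ClR_eq P hwf]
  have hnegCompl : negCompl M = Lit.pos '' M ∪ Lit.neg '' Mᶜ := by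
    simp [negCompl, Set.compl_def]
  constructor
  · intro h
    rw [AlphaStable, halpha, hnegCompl, h]
  · intro h
    rw [AlphaStable, halpha, hnegCompl] at h
    ext a
    have := Set.ext_iff.mp h (Lit.pos a)
    constructor
    · intro ha
      have := this.mp (Or.inl ⟨a, ha, rfl⟩)
      rcases this with ⟨b, hb, hbe⟩ | ⟨b, _, hbe⟩
      · rwa [show b = a from by injection hbe] at hb
      · exact absurd hbe (by simp)
    · intro ha
      have := this.mpr (Or.inl ⟨a, ha, rfl⟩)
      rcases this with ⟨b, hb, hbe⟩ | ⟨b, _, hbe⟩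
      · rwa [show b = a from by injection hbe] at hb
      · exact absurd hbe (by simp)

end DLWFS
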